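/- Let 2 ≤ a < b and R_a ⊆ V^{⊗a}, R_b ⊆ V^{⊗b}. For 2 ≤ m ≤ a−1 and 2 ≤ h ≤ b−1, the inclusions (V^{⊗m}⊗R_a) ∩ (R_a⊗V^{⊗m}) ⊆ V^{⊗(m-1)}⊗R_a⊗V and (V^{⊗h}⊗R_b) ∩ (R_b⊗V^{⊗h}) ⊆ V^{⊗(h-1)}⊗R_b⊗V hold if and only if the equalities (V^{⊗m}⊗R_a) ∩ (R_a⊗V^{⊗m}) = J̄_{a+m}^a and (V^{⊗h}⊗R_b) ∩ (R_b⊗V^{⊗h}) = J̄_{b+h}^b are satisfied. -/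

import Mathlib

/-!
STATEMENT 16 (Lemma `lem:equivalenceforincl`).

We model the tensor algebra `T(V)` on a finite-dimensional vector space `V` (with basis
`ι`) as the monoid algebra on the free monoid on `ι`; the tensor power `V^{⊗n}` is the
span `Wpow n` of the words of length `n`, and products of subspaces
(`V^{⊗j} ⊗ R ⊗ V^{⊗m}`, etc.) are products of submodules inside this algebra.
-/

noncomputable section
open scoped TensorProduct

namespace MK

variable (k : Type) [Field k] (ι : Type)

/-- The tensor algebra `T(V)` on the vector space `V` with basis `ι`. -/
abbrev T := MonoidAlgebra k (FreeMonoid ι)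

/-- The basis element of `T(V)` corresponding to a word. -/
def word (w : FreeMonoid ι) : T k ι := MonoidAlgebra.of k (FreeMonoid ι) w

/-- The tensor power `V^{⊗n}` inside `T(V)`. -/
def Wpow (n : ℕ) : Submodule k (T k ι) :=
  Submodule.span k {x | ∃ w : FreeMonoid ι, w.length = n ∧ x = word k ι w}

/-- `J̄_n^s = ∩_{j=0}^{n-s} V^{⊗j} ⊗ R_s ⊗ V^{⊗(n-s-j)}` for `n ≥ s`. -/
def Jbar (Rs : Submodule k (T k ι)) (s n : ℕ) : Submodule k (T k ι) :=
  ⨅ j ∈ Finset.range (n - s + 1), Wpow k ι j * Rs * Wpow k ι (n - s - j)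

variable {k ι}


lemma word_mul (u v : FreeMonoid ι) : word k ι (u * v) = word k ι u * word k ι v :=
  map_mul (MonoidAlgebra.of k (FreeMonoid ι)) u v

lemma word_mem_wpow {n : ℕ} {w : FreeMonoid ι} (h : w.length = n) : word k ι w ∈ Wpow k ι n :=
  Submodule.subset_span ⟨w, h, rfl⟩

lemma wpow_zero : Wpow k ι 0 = 1 := by
  rw [Wpow, Submodule.one_eq_span]
  congr 1
  ext x
  constructor
  · rintro ⟨w, hw, rfl⟩
    rw [FreeMonoid.length_eq_zero] at hw
    simp [hw, word]; rfl
  · rintro rfl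
    exact ⟨1, rfl, by simp [word]; rfl⟩

lemma wpow_mul (m n : ℕ) : Wpow k ι m * Wpow k ι n = Wpow k ι (m + n) := by
  rw [Wpow, Wpow, Wpow, Submodule.span_mul_span]
  apply le_antisymm
  · rw [Submodule.span_le]
    intro x hx
    rw [Set.mem_mul] at hx
    obtain ⟨y, ⟨u, hu, rfl⟩, z, ⟨v, hv, rfl⟩, rfl⟩ := hx
    exact Submodule.subset_span
      ⟨u * v, by simp [FreeMonoid.length_mul, hu, hv], (word_mul u v).symm⟩
  · rw [Submodule.span_le]
    rintro x ⟨w, hw, rfl⟩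
    set u := FreeMonoid.ofList ((FreeMonoid.toList w).take m) with hu
    set v := FreeMonoid.ofList ((FreeMonoid.toList w).drop m) with hv
    have huv : w = u * v := by
      rw [hu, hv, ← FreeMonoid.ofList_append, List.take_append_drop, FreeMonoid.ofList_toList]
    have hul : u.length = m := by
      have h1 : u.length = min m (FreeMonoid.toList w).length := List.length_take
      have h2 : (FreeMonoid.toList w).length = m + n := hw
      omega
    have hvl : v.length = n := by
      have h1 : v.length = (FreeMonoid.toList w).length - m := List.length_drop
      have h2 : (FreeMonoid.toList w).length = m + n := hw
      omega
    rw [huv, word_mul]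
    exact Submodule.subset_span (Set.mul_mem_mul ⟨u, hul, rfl⟩ ⟨v, hvl, rfl⟩)

def psi (w : FreeMonoid ι) : T k ι →ₗ[k] T k ι :=
  (MonoidAlgebra.coeffLinearEquiv k).symm.toLinearMap ∘ₗ
    Finsupp.lcomapDomain (· * w) (fun _ _ h => mul_right_cancel h) ∘ₗ
    (MonoidAlgebra.coeffLinearEquiv k).toLinearMap

lemma psi_apply (w : FreeMonoid ι) (f : T k ι) (u : FreeMonoid ι) :
    (psi w f).coeff u = f.coeff (u * w) := rfl

lemma suffix_eq {a u v w : FreeMonoid ι} (h : a * v = u * w) (hl : v.length = w.length) :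
    v = w ∧ a = u := by
  have h' : FreeMonoid.toList a ++ FreeMonoid.toList v
      = FreeMonoid.toList u ++ FreeMonoid.toList w := congrArg FreeMonoid.toList h
  have := List.append_inj' h' hl
  exact ⟨this.2, this.1⟩

open scoped Classical in
lemma psi_mul_word (s : T k ι) {v w : FreeMonoid ι} (hvw : v.length = w.length) :
    psi w (s * word k ι v) = if v = w then s else 0 := by
  split_ifs with h
  · subst h
    ext u
    rw [psi_apply, word, MonoidAlgebra.of_apply]
    rw [MonoidAlgebra.coeff_mul_single_eq_coeff_mul (x := s) u
      (fun a _ => ⟨fun h => mul_right_cancel h, fun h => by rw [h]⟩)]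
    exact mul_one _
  · ext u
    rw [psi_apply]
    simp only [MonoidAlgebra.coeff_zero, Finsupp.coe_zero, Pi.zero_apply]
    by_contra hne
    have hsupp : u * w ∈ (s * word k ι v).coeff.support := Finsupp.mem_support_iff.mpr hne
    have := MonoidAlgebra.support_coeff_mul_subset s (word k ι v) hsupp
    rw [Finset.mem_mul] at this
    obtain ⟨a, _, b, hb, hab⟩ := this
    have hbv : b = v := by
      have : (word k ι v).coeff.support ⊆ {v} := Finsupp.support_single_subset
      simpa using this hb
    subst hbv
    exact h (suffix_eq hab hvw).1

variable (ι) in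
def wordsOf (p : ℕ) [Fintype ι] : Finset (FreeMonoid ι) := by
  classical
  exact (Finset.univ : Finset (Fin p → ι)).image fun f => FreeMonoid.ofList (List.ofFn f)

lemma mem_wordsOf [Fintype ι] {p : ℕ} {w : FreeMonoid ι} :
    w ∈ wordsOf ι p ↔ w.length = p := by
  classical
  simp only [wordsOf, Finset.mem_image, Finset.mem_univ, true_and]
  constructor
  · rintro ⟨f, rfl⟩
    exact List.length_ofFn
  · intro h
    refine ⟨fun i => (FreeMonoid.toList w).get (Fin.cast h.symm i), ?_⟩
    apply FreeMonoid.toList.injective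
    rw [FreeMonoid.toList_ofList]
    apply List.ext_get
    · simpa [FreeMonoid.length] using h.symm
    · intro i h1 h2
      simp [List.get_ofFn]
      rfl

open scoped Classical in
lemma decomp [Fintype ι] {n p : ℕ} (hpn : p ≤ n) {x : T k ι} (hx : x ∈ Wpow k ι n) :
    x = ∑ w ∈ wordsOf ι p, psi w x * word k ι w := by
  induction hx using Submodule.span_induction with
  | mem x hmem =>
    obtain ⟨u, hu, rfl⟩ := hmem
    set u₁ := FreeMonoid.ofList ((FreeMonoid.toList u).take (n - p)) with hu1
    set u₂ := FreeMonoid.ofList ((FreeMonoid.toList u).drop (n - p)) with hu2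
    have huv : u = u₁ * u₂ := by
      rw [hu1, hu2, ← FreeMonoid.ofList_append, List.take_append_drop, FreeMonoid.ofList_toList]
    have hu2l : u₂.length = p := by
      have h1 : u₂.length = (FreeMonoid.toList u).length - (n - p) := List.length_drop
      have h2 : (FreeMonoid.toList u).length = n := hu
      omega
    have key : ∀ w ∈ wordsOf ι p, psi w (word k ι u) * word k ι w
        = if u₂ = w then word k ι u₁ * word k ι w else 0 := by
      intro w hw
      rw [huv, word_mul, psi_mul_word _ (by rw [hu2l, mem_wordsOf.mp hw])]
      split_ifs <;> simp
    rw [Finset.sum_congr rfl key, Finset.sum_ite_eq _ u₂ (fun w => word k ι u₁ * word k ι w)]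
    rw [if_pos (mem_wordsOf.mpr hu2l), huv, word_mul]
  | zero => simp
  | add y z _ _ hy hz =>
    rw [Finset.sum_congr rfl (fun w _ => by rw [map_add, add_mul] :
      ∀ w ∈ wordsOf ι p, psi w (y + z) * word k ι w
        = psi w y * word k ι w + psi w z * word k ι w),
      Finset.sum_add_distrib, ← hy, ← hz]
  | smul c y _ hy =>
    rw [Finset.sum_congr rfl (fun w _ => by rw [map_smul, smul_mul_assoc] :
      ∀ w ∈ wordsOf ι p, psi w (c • y) * word k ι w = c • (psi w y * word k ι w)),
      ← Finset.smul_sum, ← hy]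

lemma psi_mem {A : Submodule k (T k ι)} {p : ℕ} {w : FreeMonoid ι} (hw : w.length = p)
    {x : T k ι} (hx : x ∈ A * Wpow k ι p) : psi w x ∈ A := by
  classical
  refine Submodule.mul_induction_on hx ?_ ?_
  · intro s hs t ht
    induction ht using Submodule.span_induction with
    | mem t hmem =>
      obtain ⟨v, hv, rfl⟩ := hmem
      rw [psi_mul_word _ (by rw [hv, hw])]
      split_ifs
      · exact hs
      · exact A.zero_mem
    | zero => rw [mul_zero, map_zero]; exact A.zero_mem
    | add y z _ _ hy hz => rw [mul_add, map_add]; exact A.add_mem hy hz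
    | smul c y _ hy => rw [mul_smul_comm, map_smul]; exact A.smul_mem c hy
  · intro y z hy hz
    rw [map_add]
    exact A.add_mem hy hz

lemma mul_inf_mul [Fintype ι] {A B : Submodule k (T k ι)} {n p : ℕ}
    (hA : A ≤ Wpow k ι n) (hB : B ≤ Wpow k ι n) :
    (A * Wpow k ι p) ⊓ (B * Wpow k ι p) ≤ (A ⊓ B) * Wpow k ι p := by
  rintro x ⟨hxA, hxB⟩
  have hx : x ∈ Wpow k ι (n + p) := by
    rw [← wpow_mul]
    exact mul_le_mul' hA le_rfl hxA
  rw [decomp (Nat.le_add_left p n) hx]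
  refine Submodule.sum_mem _ fun w hw => ?_
  exact Submodule.mul_mem_mul
    (Submodule.mem_inf.mpr ⟨psi_mem (mem_wordsOf.mp hw) hxA, psi_mem (mem_wordsOf.mp hw) hxB⟩)
    (word_mem_wpow (mem_wordsOf.mp hw))

lemma key_le [Fintype ι] {a : ℕ} {R : Submodule k (T k ι)} (hR : R ≤ Wpow k ι a)
    (H : ∀ m, 2 ≤ m → m ≤ a - 1 →
      (Wpow k ι m * R) ⊓ (R * Wpow k ι m) ≤ Wpow k ι (m - 1) * R * Wpow k ι 1) :
    ∀ t j m, 2 ≤ m → m ≤ a - 1 → j + t = m - 1 → 1 ≤ j →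
      (Wpow k ι m * R) ⊓ (R * Wpow k ι m) ≤ Wpow k ι j * R * Wpow k ι (m - j) := by
  intro t
  induction t with
  | zero =>
    intro j m hm2 hma hj _
    obtain rfl : j = m - 1 := by omega
    rw [show m - (m - 1) = 1 from by omega]
    exact H m hm2 hma
  | succ t ih =>
    intro j m hm2 hma hj hj1
    have step1 := ih (j + 1) m hm2 hma (by omega) (by omega)
    have hAle : Wpow k ι (j + 1) * R ≤ Wpow k ι (j + 1 + a) :=
      (mul_le_mul' le_rfl hR).trans (le_of_eq (wpow_mul _ _))
    have hBle : R * Wpow k ι (j + 1) ≤ Wpow k ι (j + 1 + a) :=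
      (mul_le_mul' hR le_rfl).trans
        (le_of_eq (by rw [wpow_mul, Nat.add_comm]))
    have hX2 : (Wpow k ι m * R) ⊓ (R * Wpow k ι m)
        ≤ (R * Wpow k ι (j + 1)) * Wpow k ι (m - (j + 1)) := by
      refine inf_le_right.trans (le_of_eq ?_)
      rw [mul_assoc, wpow_mul, show j + 1 + (m - (j + 1)) = m from by omega]
    have comb : (Wpow k ι m * R) ⊓ (R * Wpow k ι m)
        ≤ ((Wpow k ι (j + 1) * R) ⊓ (R * Wpow k ι (j + 1))) * Wpow k ι (m - (j + 1)) :=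
      (le_inf step1 hX2).trans (mul_inf_mul hAle hBle)
    refine comb.trans ?_
    refine (mul_le_mul' (H (j + 1) (by omega) (by omega)) le_rfl).trans (le_of_eq ?_)
    rw [show j + 1 - 1 = j from rfl, mul_assoc (Wpow k ι j * R), wpow_mul,
      show 1 + (m - (j + 1)) = m - j from by omega]

lemma jbar_eq {a m : ℕ} (R : Submodule k (T k ι)) (hm : a + m - a = m) :
    Jbar k ι R a (a + m)
      = ⨅ j ∈ Finset.range (m + 1), Wpow k ι j * R * Wpow k ι (m - j) := by
  rw [Jbar, hm]

lemma key_eq [Fintype ι] {a : ℕ} {R : Submodule k (T k ι)} (hR : R ≤ Wpow k ι a)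
    (H : ∀ m, 2 ≤ m → m ≤ a - 1 →
      (Wpow k ι m * R) ⊓ (R * Wpow k ι m) ≤ Wpow k ι (m - 1) * R * Wpow k ι 1) :
    ∀ m, 2 ≤ m → m ≤ a - 1 →
      (Wpow k ι m * R) ⊓ (R * Wpow k ι m) = Jbar k ι R a (a + m) := by
  intro m hm2 hma
  rw [jbar_eq R (by omega)]
  apply le_antisymm
  · refine le_iInf fun j => le_iInf fun hj => ?_
    rw [Finset.mem_range, Nat.lt_succ_iff] at hj
    rcases Nat.eq_zero_or_pos j with rfl | h1
    · rw [wpow_zero, one_mul, Nat.sub_zero]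
      exact inf_le_right
    · rcases eq_or_lt_of_le hj with rfl | hlt
      · rw [Nat.sub_self, wpow_zero, mul_one]
        exact inf_le_left
      · exact key_le hR H (m - 1 - j) j m hm2 hma (by omega) h1
  · refine le_inf ?_ ?_
    · refine (iInf₂_le m (Finset.self_mem_range_succ m)).trans (le_of_eq ?_)
      rw [Nat.sub_self, wpow_zero, mul_one]
    · refine (iInf₂_le 0 (Finset.mem_range.mpr (by omega))).trans (le_of_eq ?_)
      rw [wpow_zero, one_mul, Nat.sub_zero]

lemma key_incl {a : ℕ} {R : Submodule k (T k ι)}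
    (Heq : ∀ m, 2 ≤ m → m ≤ a - 1 →
      (Wpow k ι m * R) ⊓ (R * Wpow k ι m) = Jbar k ι R a (a + m)) :
    ∀ m, 2 ≤ m → m ≤ a - 1 →
      (Wpow k ι m * R) ⊓ (R * Wpow k ι m) ≤ Wpow k ι (m - 1) * R * Wpow k ι 1 := by
  intro m hm2 hma
  rw [Heq m hm2 hma, jbar_eq R (by omega)]
  refine (iInf₂_le (m - 1) (Finset.mem_range.mpr (by omega))).trans (le_of_eq ?_)
  rw [show m - (m - 1) = 1 from by omega]

variable (k ι)

/-- Let `2 ≤ a < b` and `R_a ⊆ V^{⊗a}`, `R_b ⊆ V^{⊗b}`.  For `2 ≤ m ≤ a−1` and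
`2 ≤ h ≤ b−1`, the inclusions
`(V^{⊗m}⊗R_a) ∩ (R_a⊗V^{⊗m}) ⊆ V^{⊗(m-1)}⊗R_a⊗V` and
`(V^{⊗h}⊗R_b) ∩ (R_b⊗V^{⊗h}) ⊆ V^{⊗(h-1)}⊗R_b⊗V` hold if and only if the equalities
`(V^{⊗m}⊗R_a) ∩ (R_a⊗V^{⊗m}) = J̄_{a+m}^a` and
`(V^{⊗h}⊗R_b) ∩ (R_b⊗V^{⊗h}) = J̄_{b+h}^b` are satisfied. -/
theorem inclusions_iff_eq_jbar [Fintype ι] (a b : ℕ) (ha : 2 ≤ a) (hab : a < b)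
    (Ra Rb : Submodule k (T k ι)) (hRa : Ra ≤ Wpow k ι a) (hRb : Rb ≤ Wpow k ι b) :
    ((∀ m, 2 ≤ m → m ≤ a - 1 →
        (Wpow k ι m * Ra) ⊓ (Ra * Wpow k ι m) ≤ Wpow k ι (m - 1) * Ra * Wpow k ι 1) ∧
      (∀ h, 2 ≤ h → h ≤ b - 1 →
        (Wpow k ι h * Rb) ⊓ (Rb * Wpow k ι h) ≤ Wpow k ι (h - 1) * Rb * Wpow k ι 1)) ↔
    ((∀ m, 2 ≤ m → m ≤ a - 1 →
        (Wpow k ι m * Ra) ⊓ (Ra * Wpow k ι m) = Jbar k ι Ra a (a + m)) ∧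
      (∀ h, 2 ≤ h → h ≤ b - 1 →
        (Wpow k ι h * Rb) ⊓ (Rb * Wpow k ι h) = Jbar k ι Rb b (b + h))) := by
  constructor
  · rintro ⟨H1, H2⟩
    exact ⟨key_eq hRa H1, key_eq hRb H2⟩
  · rintro ⟨H1, H2⟩
    exact ⟨key_incl H1, key_incl H2⟩

end MK
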